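/- arXiv:2211.05726 — 2 statements merged into one kernel-verified Lean document; each statement's English description precedes it below -/
import Mathlib

section
/- For any connected graph G on n ≥ 2 vertices with minimum degree δ ≥ 2, every spanning tree of G has at most (n-2)/(δ-1) full degree vertices. -/
open SimpleGraph

/-- Degree of `v` in `T` (as `Set.ncard` of the neighbor set). -/
noncomputable def deg {V : Type*} (T : SimpleGraph V) (v : V) : ℕ :=
  (T.neighborSet v).ncard

/-- `T` is a spanning tree of `G`. -/
def IsSpanningTree {V : Type*} (G T : SimpleGraph V) : Prop :=
  T ≤ G ∧ T.IsTree

/-- Number of full degree vertices of the spanning tree `T` of `G`. -/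
noncomputable def fullDegCount {V : Type*} (G T : SimpleGraph V) : ℕ :=
  {v : V | deg T v = deg G v}.ncard

/-- Number of leaves of `T`. -/
noncomputable def leafCount {V : Type*} (T : SimpleGraph V) : ℕ :=
  {v : V | deg T v = 1}.ncard

/-- `φ(G)`: maximum number of full degree vertices over all spanning trees. -/
noncomputable def phi {V : Type*} (G : SimpleGraph V) : ℕ :=
  sSup {k | ∃ T : SimpleGraph V, IsSpanningTree G T ∧ fullDegCount G T = k}

/-- `λ(G)`: maximum number of leaves over all spanning trees. -/
noncomputable def lam {V : Type*} (G : SimpleGraph V) : ℕ :=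
  sSup {k | ∃ T : SimpleGraph V, IsSpanningTree G T ∧ leafCount T = k}

/-- `S` is a connected dominating set of `G`. -/
def IsConnDomSet {V : Type*} (G : SimpleGraph V) (S : Set V) : Prop :=
  (G.induce S).Connected ∧ ∀ v : V, v ∈ S ∨ ∃ u ∈ S, G.Adj u v

/-- `γ_C(G)`: minimum size of a connected dominating set. -/
noncomputable def gammaC {V : Type*} (G : SimpleGraph V) : ℕ :=
  sInf {k | ∃ S : Set V, IsConnDomSet G S ∧ S.ncard = k}

/-- Closed neighborhood of `v` in `G`. -/
def closedNbhd {V : Type*} (G : SimpleGraph V) (v : V) : Set V :=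
  insert v (G.neighborSet v)

/-- The square of a graph: join vertices at distance at most 2. -/
def square {V : Type*} (G : SimpleGraph V) : SimpleGraph V where
  Adj u v := u ≠ v ∧ G.Reachable u v ∧ G.dist u v ≤ 2
  symm := ⟨by
    rintro u v ⟨h1, h2, h3⟩
    exact ⟨h1.symm, h2.symm, by rwa [SimpleGraph.dist_comm]⟩⟩
  loopless := ⟨by rintro v ⟨h, -⟩; exact h rfl⟩

theorem stmt1 {V : Type*} [Fintype V] (G T : SimpleGraph V) (n δ : ℕ)
    (hn : n = Fintype.card V) (hn2 : 2 ≤ n) (hG : G.Connected) (hδ2 : 2 ≤ δ)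
    (hδ : ∀ v : V, δ ≤ deg G v) (hT : IsSpanningTree G T) :
    (fullDegCount G T : ℝ) ≤ (n - 2 : ℝ) / (δ - 1) := by
  classical
  obtain ⟨hle, htree⟩ := hT
  have hdeg : ∀ (H : SimpleGraph V) (v : V), deg H v = H.degree v := by
    intro H v
    simp [deg, Set.ncard_eq_toFinset_card', SimpleGraph.degree, SimpleGraph.neighborFinset]
  -- T has min degree 1
  have hpos : ∀ v : V, 1 ≤ T.degree v := by
    intro v
    obtain ⟨u, hu⟩ := Fintype.exists_ne_of_one_lt_card (by omega : 1 < Fintype.card V) v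
    have p := (htree.isConnected.preconnected v u).some
    have hadj : T.Adj v (p.getVert 1) := p.adj_snd (Walk.not_nil_of_ne hu.symm)
    rw [Nat.succ_le_iff, T.degree_pos_iff_exists_adj]
    exact ⟨_, hadj⟩
  set S : Finset V := Set.toFinset {v : V | deg T v = deg G v} with hS
  have hk : fullDegCount G T = S.card := Set.ncard_eq_toFinset_card' _
  -- degree sum
  have hsum : ∑ v, T.degree v = 2 * (n - 1) := by
    have he := htree.card_edgeFinset
    rw [T.sum_degrees_eq_twice_card_edges]
    omega
  have hfull : ∀ v ∈ S, δ ≤ T.degree v := by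
    intro v hv
    rw [hS, Set.mem_toFinset] at hv
    rw [← hdeg]
    rw [Set.mem_setOf_eq] at hv
    rw [hv]
    exact hδ v
  have h1 : δ * S.card + (Sᶜ).card ≤ ∑ v, T.degree v := by
    rw [← Finset.sum_add_sum_compl S]
    gcongr
    · calc δ * S.card = ∑ _v ∈ S, δ := by rw [Finset.sum_const, smul_eq_mul, mul_comm]
        _ ≤ ∑ v ∈ S, T.degree v := Finset.sum_le_sum hfull
    · calc (Sᶜ).card = ∑ _v ∈ Sᶜ, 1 := by simp
        _ ≤ ∑ v ∈ Sᶜ, T.degree v := Finset.sum_le_sum fun v _ => hpos v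
  have hcc : (Sᶜ).card = n - S.card := by
    rw [Finset.card_compl, hn]
  have hkn : S.card ≤ n := by
    rw [hn]; exact le_trans (Finset.card_le_card (Finset.subset_univ S)) (by simp)
  have key : δ * S.card + (n - S.card) ≤ 2 * (n - 1) := by
    rw [← hcc, ← hsum]; exact h1
  have keyR : (δ:ℝ) * S.card + ((n:ℝ) - S.card) ≤ 2 * ((n:ℝ) - 1) := by
    have := (Nat.cast_le (α := ℝ)).2 key
    push_cast [Nat.cast_sub hkn, Nat.cast_sub (by omega : 1 ≤ n)] at this
    linarith
  rw [hk, le_div_iff₀ (by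
    have h2r : (2:ℝ) ≤ (δ:ℝ) := by exact_mod_cast hδ2
    linarith : (0:ℝ) < (δ:ℝ) - 1)]
  nlinarith [keyR]
end

section
/- For r ≥ 3 and m ≥ 3, the graph G = K_{r-1} □ C_m on n = (r-1)m vertices satisfies φ(G) ≥ m - 2 = n/(r-1) - 2, where φ(G) is the maximum number of full degree vertices in a spanning tree. -/
open SimpleGraph

section TreeLemma
variable {V : Type*}

lemma head_eq_parent_of_cycle {G : SimpleGraph V} {p : V → V} {μ : V → ℕ} {root : V}
    (hroot : p root = root)
    (hdec : ∀ v, v ≠ root → μ (p v) < μ v)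
    (hedge : ∀ u v, G.Adj u v → p u = v ∨ p v = u)
    {x y : V} (h1 : G.Adj x y) (hy : μ y ≤ μ x) : y = p x := by
  rcases hedge x y h1 with h | h
  · exact h.symm
  · by_cases hyr : y = root
    · subst hyr; rw [hroot] at h; exact absurd h.symm h1.ne
    · have := hdec y hyr
      rw [h] at this; omega

lemma isTree_of_parent (G : SimpleGraph V) (p : V → V) (μ : V → ℕ) (root : V)
    (hroot : p root = root)
    (hadj : ∀ v, v ≠ root → G.Adj v (p v))
    (hdec : ∀ v, v ≠ root → μ (p v) < μ v)
    (hedge : ∀ u v, G.Adj u v → p u = v ∨ p v = u) :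
    G.IsTree := by
  classical
  have : Nonempty V := ⟨root⟩
  constructor
  · -- connected
    have key : ∀ n v, μ v < n → G.Reachable v root := by
      intro n
      induction n with
      | zero => intro v h; omega
      | succ n ih =>
        intro v h
        by_cases hv : v = root
        · subst hv; rfl
        · exact (hadj v hv).reachable.trans (ih (p v) (by have := hdec v hv; omega))
    exact ⟨fun u w => (key (μ u + 1) u (by omega)).trans (key (μ w + 1) w (by omega)).symm⟩
  · -- acyclic
    intro v c hc
    obtain ⟨x, hxmem, hxmax⟩ := Finset.exists_max_image c.support.toFinset μ
      ⟨v, by simp [Walk.start_mem_support]⟩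
    simp only [List.mem_toFinset] at hxmem hxmax
    set c' := c.rotate x hxmem with hc'def
    have hc' : c'.IsCycle := hc.rotate hxmem
    have hsupp : ∀ w ∈ c'.support, μ w ≤ μ x := by
      intro w hw
      rcases (Walk.mem_support_iff c').mp hw with h | h
      · exact h ▸ le_refl _
      · refine hxmax w ?_
        have hrot := (Walk.support_rotate c x hxmem).mem_iff (a := w)
        rw [← hc'def] at hrot
        rw [Walk.mem_support_iff]
        exact Or.inr (hrot.mp h)
    cases hcc : c' with
    | nil => exact hc'.ne_nil hcc
    | @cons _ y _ h1 q =>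
      rw [hcc] at hc' hsupp
      have hy : y = p x :=
        head_eq_parent_of_cycle hroot hdec hedge h1
          (hsupp y (by simp [Walk.support_cons, Walk.start_mem_support]))
      cases hcc2 : (Walk.cons h1 q).reverse with
      | nil =>
        have := congrArg Walk.length hcc2
        rw [Walk.length_reverse] at this
        have h3 := hc'.three_le_length
        simp [Walk.length_cons, Walk.length_nil] at this
      | @cons _ z _ h2 q2 =>
        have hz : z = p x := by
          refine head_eq_parent_of_cycle hroot hdec hedge h2 ?_
          refine hsupp z ?_
          have : z ∈ (Walk.cons h1 q).reverse.support := by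
            rw [hcc2]; simp [Walk.support_cons]
          rwa [Walk.support_reverse, List.mem_reverse] at this
        -- edges contradiction
        have hedges : q.edges.reverse ++ [s(x, y)] = s(x, z) :: q2.edges := by
          have e1 : (Walk.cons h1 q).reverse.edges = s(x, z) :: q2.edges := by
            rw [hcc2, Walk.edges_cons]
          rw [Walk.edges_reverse, Walk.edges_cons, List.reverse_cons] at e1
          exact e1
        have hqne : q.edges ≠ [] := by
          have h3 := hc'.three_le_length
          have := Walk.length_edges q
          intro hnil
          rw [hnil] at this
          simp [Walk.length_cons] at h3
          simp at this
          omega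
        obtain ⟨e, t, het⟩ := List.exists_cons_of_ne_nil (by simpa using hqne :
          q.edges.reverse ≠ [])
        rw [het] at hedges
        simp only [List.cons_append, List.cons.injEq] at hedges
        have hez : e = s(x, y) := by rw [hedges.1, hz, ← hy]
        have hemem : s(x, y) ∈ q.edges := by
          have : e ∈ q.edges.reverse := het ▸ List.mem_cons_self
          rwa [hez, List.mem_reverse] at this
        have hnodup := hc'.edges_nodup
        rw [Walk.edges_cons] at hnodup
        exact (List.nodup_cons.mp hnodup).1 hemem

end TreeLemma


private lemma mod_eq_one_cases {n A : ℕ} (hn : 2 ≤ n) (hA : A < 2 * n) (h : A % n = 1) :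
    A = 1 ∨ A = n + 1 := by
  rcases Nat.lt_or_ge A n with h1 | h1
  · left; rwa [Nat.mod_eq_of_lt h1] at h
  · right; rw [Nat.mod_eq_sub_mod h1, Nat.mod_eq_of_lt (by omega)] at h; omega

private lemma cyc_adj_of_succ {b : ℕ} {j j' : Fin (b + 3)} (h : j.val + 1 = j'.val) :
    (cycleGraph (b + 3)).Adj j j' := by
  rw [cycleGraph_adj']
  right
  rw [Fin.sub_def]
  simp only
  have h2 := j'.isLt
  have h1 := j.isLt
  have he : (b + 3 - j.val) + j'.val = (b + 3) + 1 := by omega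
  rw [he, Nat.add_mod_left, Nat.mod_eq_of_lt (by omega)]

private lemma cyc_adj_cases {b : ℕ} {j j' : Fin (b + 3)} (h : (cycleGraph (b + 3)).Adj j j')
    (h1 : 1 ≤ j.val) (h2 : j.val ≤ b + 1) :
    j'.val = j.val - 1 ∨ j'.val = j.val + 1 := by
  have hj := j.isLt
  have hj' := j'.isLt
  rw [cycleGraph_adj'] at h
  rcases h with h | h
  · rw [Fin.sub_def] at h
    simp only at h
    rcases mod_eq_one_cases (by omega) (by omega) h with h | h
    · omega
    · left; omega
  · rw [Fin.sub_def] at h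
    simp only at h
    rcases mod_eq_one_cases (by omega) (by omega) h with h | h
    · right; omega
    · omega

section Construction
variable (a b : ℕ)

def par : Fin (a+2) × Fin (b+3) → Fin (a+2) × Fin (b+3) := fun v =>
  if v.1 = 0 then (0, ⟨v.2.val - 1, by omega⟩) else (0, v.2)

def mu : Fin (a+2) × Fin (b+3) → ℕ := fun v => v.2.val * (a + 2) + v.1.val

def Tr : SimpleGraph (Fin (a+2) × Fin (b+3)) :=
  SimpleGraph.fromRel (fun u v => par a b u = v)

lemma par_root : par a b (0, 0) = (0, 0) := by
  simp [par]

lemma mu_dec : ∀ v, v ≠ ((0 : Fin (a+2)), (0 : Fin (b+3))) → mu a b (par a b v) < mu a b v := by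
  rintro ⟨i, j⟩ hv
  by_cases hi : i = 0
  · subst hi
    have hj : j ≠ 0 := fun h => hv (by rw [h])
    have hj1 : 1 ≤ j.val := by
      rcases Nat.eq_zero_or_pos j.val with h | h
      · exact absurd (Fin.ext h) hj
      · omega
    have hm : (j.val - 1) * (a + 2) < j.val * (a + 2) :=
      Nat.mul_lt_mul_of_lt_of_le (by omega) le_rfl (by omega)
    simp [par, mu]
    have h0 : ((0 : Fin (b+3)) : ℕ) = 0 := rfl
    omega
  · have hi1 : 1 ≤ i.val := by
      rcases Nat.eq_zero_or_pos i.val with h | h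
      · exact absurd (Fin.ext h) hi
      · omega
    simp only [par, mu, if_neg hi, Fin.val_zero, add_zero]
    omega

lemma Tr_adj {u v : Fin (a+2) × Fin (b+3)} :
    (Tr a b).Adj u v ↔ u ≠ v ∧ (par a b u = v ∨ par a b v = u) := by
  simp [Tr, SimpleGraph.fromRel_adj]

lemma Tr_le_half {u v : Fin (a+2) × Fin (b+3)} (hne : u ≠ v) (hp : par a b u = v) :
    (completeGraph (Fin (a+2)) □ cycleGraph (b+3)).Adj u v := by
  obtain ⟨i, j⟩ := u
  rw [boxProd_adj]
  by_cases hi : i = 0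
  · subst hi
    have hp' : v = ((0 : Fin (a+2)), (⟨j.val - 1, by omega⟩ : Fin (b+3))) := by
      rw [← hp]; simp [par]
    subst hp'
    have hj1 : 1 ≤ j.val := by
      by_contra h
      exact hne (Prod.ext rfl (Fin.ext (by dsimp only; omega)))
    right
    refine ⟨(cyc_adj_of_succ ?_).symm, rfl⟩
    dsimp only
    omega
  · have hp' : v = ((0 : Fin (a+2)), j) := by rw [← hp]; simp [par, hi]
    subst hp'
    left
    exact ⟨hi, rfl⟩

lemma Tr_le : Tr a b ≤ (completeGraph (Fin (a+2)) □ cycleGraph (b+3)) := by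
  intro u v h
  rw [Tr_adj] at h
  rcases h.2 with hp | hp
  · exact Tr_le_half a b h.1 hp
  · exact (Tr_le_half a b (Ne.symm h.1) hp).symm

lemma Tr_full (j : Fin (b+3)) (h1 : 1 ≤ j.val) (h2 : j.val ≤ b + 1) :
    (Tr a b).neighborSet (0, j) = (completeGraph (Fin (a+2)) □ cycleGraph (b+3)).neighborSet (0, j) := by
  apply Set.Subset.antisymm
  · exact fun w hw => Tr_le a b hw
  · rintro ⟨i', j'⟩ hw
    simp only [mem_neighborSet] at hw ⊢
    rw [boxProd_adj] at hw
    rw [Tr_adj]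
    dsimp only at hw ⊢
    rcases hw with ⟨hadj, hj⟩ | ⟨hadj, hi⟩
    · -- complete-graph edge within the column
      have hi' : i' ≠ 0 := Ne.symm hadj
      refine ⟨?_, Or.inr ?_⟩
      · intro h; exact hi' (congrArg Prod.fst h).symm
      · rw [par]
        simp only [if_neg hi']
        rw [hj]
    · -- cycle edge
      subst hi
      rcases cyc_adj_cases hadj h1 h2 with hc | hc
      · refine ⟨?_, Or.inl ?_⟩
        · intro h
          have := congrArg (fun x => (Prod.snd x).val) h
          dsimp only at this
          omega
        · show par a b (0, j) = (0, j')
          have hpj : par a b (0, j) = (0, ⟨j.val - 1, by omega⟩) := by simp [par]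
          rw [hpj]
          exact Prod.ext rfl (Fin.ext (by simpa using hc.symm))
      · refine ⟨?_, Or.inr ?_⟩
        · intro h
          have := congrArg (fun x => (Prod.snd x).val) h
          dsimp only at this
          omega
        · show par a b (0, j') = (0, j)
          have hpj : par a b (0, j') = (0, ⟨j'.val - 1, by omega⟩) := by simp [par]
          rw [hpj]
          exact Prod.ext rfl (Fin.ext (by simp; omega))

end Construction

theorem aux (a b : ℕ) :
    b + 1 ≤ phi (completeGraph (Fin (a+2)) □ cycleGraph (b+3)) := by
  classical
  set G := completeGraph (Fin (a+2)) □ cycleGraph (b+3) with hG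
  set T := Tr a b with hT
  have htree : T.IsTree := by
    refine isTree_of_parent T (par a b) (mu a b) (0, 0) (par_root a b) ?_ (mu_dec a b) ?_
    · intro v hv
      rw [Tr_adj]
      refine ⟨?_, Or.inl rfl⟩
      intro h
      have := mu_dec a b v hv
      rw [← h] at this
      omega
    · intro u v h
      rw [Tr_adj] at h
      exact h.2
  have hspan : IsSpanningTree G T := ⟨Tr_le a b, htree⟩
  -- the witness set of full-degree vertices
  set f : Fin (b+1) → Fin (a+2) × Fin (b+3) :=
    fun t => ((0 : Fin (a+2)), (⟨t.val + 1, by omega⟩ : Fin (b+3))) with hf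
  have hfinj : Function.Injective f := by
    intro s t h
    have := congrArg (fun x => (Prod.snd x).val) h
    simp [hf] at this
    exact Fin.ext this
  have hsub : Set.range f ⊆ {v | deg T v = deg G v} := by
    rintro w ⟨t, rfl⟩
    simp only [Set.mem_setOf_eq, deg]
    rw [hf]
    simp only
    rw [Tr_full a b _ (by simp) (by simp; omega)]
  have hcard : (Set.range f).ncard = b + 1 := by
    rw [← Set.image_univ, Set.ncard_image_of_injective _ hfinj, Set.ncard_univ]
    simp
  have hle : b + 1 ≤ fullDegCount G T := by
    rw [fullDegCount, ← hcard]
    exact Set.ncard_le_ncard hsub (Set.toFinite _)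
  refine le_trans hle (le_csSup ?_ ⟨T, hspan, rfl⟩)
  refine ⟨Fintype.card (Fin (a+2) × Fin (b+3)), ?_⟩
  rintro k ⟨T', _, rfl⟩
  rw [fullDegCount]
  have hb := Set.ncard_le_ncard (Set.subset_univ {v | deg T' v = deg G v}) Set.finite_univ
  rwa [Set.ncard_univ, Nat.card_eq_fintype_card] at hb


theorem stmt14 (r m : ℕ) (hr : 3 ≤ r) (hm : 3 ≤ m) :
    m - 2 ≤ phi (completeGraph (Fin (r - 1)) □ SimpleGraph.cycleGraph m) := by
  obtain ⟨a, rfl⟩ : ∃ a, r = a + 3 := ⟨r - 3, by omega⟩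
  obtain ⟨b, rfl⟩ : ∃ b, m = b + 3 := ⟨m - 3, by omega⟩
  exact aux a b
end
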